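/- If U is a generalized Clifford operator on ℂ^d ⊗ ℂ^d and |Ψ(U†)⟩ := (U†⊗I)(|Φ_d⟩^{AR_A}|Φ_d⟩^{BR_B}), then for every generalized Pauli σ_{pq} acting on R_B there exist a phase θ and Pauli indices (p',q'), (r',s') such that (I ⊗ σ_{pq}^{R_B})|Ψ(U†)⟩ = e^{iθ}(σ_{p'q'}^A ⊗ σ_{r's'}^B ⊗ I^{R_AR_B})|Ψ(U†)⟩. Consequently, for the reduced state on A R_A R_B: σ_{pq}^{R_B} Ψ(U†)^{AR_AR_B} σ_{pq}^{†R_B} = σ_{p'q'}^A Ψ(U†)^{AR_AR_B} σ_{p'q'}^{†A}. -/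

import Mathlib

open scoped BigOperators Kronecker ComplexOrder
open Matrix Complex MeasureTheory

noncomputable section

/-- The maximally entangled state `|Φ_d⟩ = (1/√d) Σ_t |t⟩⊗|t⟩` as a vector on `Fin d × Fin d`. -/
def Phi (d : ℕ) : Fin d × Fin d → ℂ := fun p => if p.1 = p.2 then ((1 / Real.sqrt d : ℝ) : ℂ) else 0

/-- Action of `E ⊗ I` on a bipartite vector. -/
def actL {d : ℕ} (E : Matrix (Fin d) (Fin d) ℂ) (v : Fin d × Fin d → ℂ) : Fin d × Fin d → ℂ :=
  fun p => ∑ a', E p.1 a' * v (a', p.2)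

/-- Action of `I ⊗ F` on a bipartite vector. -/
def actR {d : ℕ} (F : Matrix (Fin d) (Fin d) ℂ) (v : Fin d × Fin d → ℂ) : Fin d × Fin d → ℂ :=
  fun p => ∑ b', F p.2 b' * v (p.1, b')

/-- Outer product `|v⟩⟨v|`. -/
def outer {ι : Type*} [Fintype ι] (v : ι → ℂ) : Matrix ι ι ℂ := Matrix.of fun i j => v i * star (v j)

open Classical in
/-- Positive-semidefinite square root, extended by `0` off the PSD cone. -/
def psqrt {n : Type*} [Fintype n] [DecidableEq n] (A : Matrix n n ℂ) : Matrix n n ℂ :=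
  if h : A.PosSemidef then (h.1.eigenvectorUnitary : Matrix n n ℂ) *
    diagonal ((↑) ∘ (√·) ∘ h.1.eigenvalues) * (star h.1.eigenvectorUnitary : Matrix n n ℂ) else 0

/-- Trace norm `‖A‖₁ = Tr √(AᴴA)`. -/
def traceNorm {n : Type*} [Fintype n] [DecidableEq n] (A : Matrix n n ℂ) : ℝ :=
  (psqrt (Aᴴ * A)).trace.re

/-- Uhlmann fidelity `F(ρ,σ) = (Tr √(√ρ σ √ρ))²`. -/
def fid {n : Type*} [Fintype n] [DecidableEq n] (ρ σ : Matrix n n ℂ) : ℝ :=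
  ((psqrt (psqrt ρ * σ * psqrt ρ)).trace.re) ^ 2

/-- Von Neumann entropy of a Hermitian matrix, `S(ρ) = -Σ λᵢ log λᵢ`. -/
def vN {n : Type*} [Fintype n] [DecidableEq n] {ρ : Matrix n n ℂ} (h : ρ.IsHermitian) : ℝ :=
  -∑ i, h.eigenvalues i * Real.log (h.eigenvalues i)

/-- Cyclic shift `X|t⟩ = |t-1⟩`, i.e. `X = Σ_t |t⟩⟨t+1|`. -/
def Xop (d : ℕ) [NeZero d] : Matrix (Fin d) (Fin d) ℂ :=
  Matrix.of fun t t' => if t' = t + 1 then 1 else 0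

/-- Clock operator `Z = Σ_t e^{2πit/d}|t⟩⟨t|`. -/
def Zop (d : ℕ) [NeZero d] : Matrix (Fin d) (Fin d) ℂ :=
  Matrix.of fun t t' => if t = t' then Complex.exp (2 * Real.pi * Complex.I * ((t : ℕ) : ℂ) / d) else 0

/-- Generalized Pauli operator `σ_{pq} = X^p Z^q`. -/
def pauli (d : ℕ) [NeZero d] (p q : Fin d) : Matrix (Fin d) (Fin d) ℂ :=
  Xop d ^ (p : ℕ) * Zop d ^ (q : ℕ)

/-- `|Ψ(U)⟩ = (U^{AB} ⊗ I^{R_A R_B})(|Φ_d⟩^{AR_A} ⊗ |Φ_d⟩^{BR_B})`, indexed `((a,r_A),(b,r_B))`. -/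
def PsiVec {d : ℕ} (U : Matrix (Fin d × Fin d) (Fin d × Fin d) ℂ) :
    (Fin d × Fin d) × (Fin d × Fin d) → ℂ :=
  fun x => ∑ a', ∑ b', U (x.1.1, x.2.1) (a', b') * Phi d (a', x.1.2) * Phi d (b', x.2.2)

/-- Reduced density matrix on the first factor of a bipartite pure state. -/
def redFst {ι κ : Type*} [Fintype ι] [Fintype κ] (v : ι × κ → ℂ) : Matrix ι ι ℂ :=
  Matrix.of fun x x' => ∑ y, v (x, y) * star (v (x', y))

/-- Reduced density matrix on the second factor of a bipartite pure state. -/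
def redSnd {ι κ : Type*} [Fintype ι] [Fintype κ] (v : ι × κ → ℂ) : Matrix κ κ ℂ :=
  Matrix.of fun y y' => ∑ x, v (x, y) * star (v (x, y'))

namespace CP
variable (d : ℕ) [NeZero d]
open Fin.NatCast Fin.CommRing

def ω : ℂ := Complex.exp (2 * Real.pi * Complex.I / d)

lemma ω_pow (n : ℕ) : ω d ^ n = Complex.exp (2 * Real.pi * Complex.I * n / d) := by
  rw [ω, ← Complex.exp_nat_mul]
  ring_nf

lemma ω_pow_d : ω d ^ d = 1 := by
  rw [ω_pow]
  have hd : (d : ℂ) ≠ 0 := Nat.cast_ne_zero.mpr (NeZero.ne d)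
  rw [mul_div_assoc, div_self hd, mul_one, Complex.exp_eq_one_iff]
  exact ⟨1, by ring⟩

lemma ω_pow_mod (a : ℕ) : ω d ^ (a % d) = ω d ^ a := by
  conv_rhs => rw [← Nat.div_add_mod a d]
  rw [pow_add, pow_mul, ω_pow_d, one_pow, one_mul]

lemma ω_pow_congr {a b : ℕ} (h : a % d = b % d) : ω d ^ a = ω d ^ b := by
  rw [← ω_pow_mod d a, ← ω_pow_mod d b, h]

lemma star_ω_pow (n : ℕ) : star (ω d ^ n) * ω d ^ n = 1 := by
  rw [ω_pow]
  show (starRingEnd ℂ) _ * _ = 1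
  rw [← Complex.exp_conj, ← Complex.exp_add]
  have : (starRingEnd ℂ) (2 * Real.pi * Complex.I * n / d) = -(2 * Real.pi * Complex.I * n / d) := by
    rw [map_div₀]
    simp only [_root_.map_mul, map_ofNat, Complex.conj_I, Complex.conj_natCast, Complex.conj_ofReal]
    ring
  rw [this, neg_add_cancel, Complex.exp_zero]

lemma ω_pow_ne_zero (n : ℕ) : ω d ^ n ≠ 0 := by
  rw [ω_pow]; exact Complex.exp_ne_zero _

lemma ω_pow_inj {a b : Fin d} (h : ω d ^ (a : ℕ) = ω d ^ (b : ℕ)) : a = b := by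
  rw [ω_pow, ω_pow, Complex.exp_eq_exp_iff_exists_int] at h
  obtain ⟨n, hn⟩ := h
  have hd : (d : ℂ) ≠ 0 := Nat.cast_ne_zero.mpr (NeZero.ne d)
  have hI : (2 : ℂ) * Real.pi * Complex.I ≠ 0 := by
    simp [Real.pi_ne_zero, Complex.I_ne_zero]
  have hz : ((a : ℕ) : ℂ) = ((b : ℕ) : ℂ) + (n : ℂ) * d := by
    apply mul_left_cancel₀ hI
    field_simp at hn
    linear_combination (2 * Real.pi * Complex.I) * hn
  have haz : ((a : ℕ) : ℤ) = ((b : ℕ) : ℤ) + n * d := by exact_mod_cast hz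
  have h1 : ((a : ℕ) : ℤ) < d := by exact_mod_cast a.isLt
  have h2 : ((b : ℕ) : ℤ) < d := by exact_mod_cast b.isLt
  have h3 : 0 ≤ ((a : ℕ) : ℤ) := Int.natCast_nonneg _
  have h4 : 0 ≤ ((b : ℕ) : ℤ) := Int.natCast_nonneg _
  have hn0 : n = 0 := by nlinarith
  subst hn0
  simp only [zero_mul, add_zero] at haz
  exact Fin.ext (by exact_mod_cast haz)


lemma Xpow_apply (m : ℕ) (t t' : Fin d) :
    (Xop d ^ m) t t' = if t' = t + (m : Fin d) then 1 else 0 := by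
  induction m generalizing t t' with
  | zero => simp [Matrix.one_apply, eq_comm]
  | succ n ih =>
    rw [pow_succ, Matrix.mul_apply]
    simp only [ih]
    simp only [Xop, Matrix.of_apply, ite_mul, one_mul, zero_mul]
    rw [Finset.sum_ite_eq' Finset.univ (t + (n : Fin d)) (fun s => if t' = s + 1 then (1:ℂ) else 0)]
    simp [Nat.cast_add, Nat.cast_one, add_assoc]

lemma Zpow_apply (m : ℕ) (t t' : Fin d) :
    (Zop d ^ m) t t' = if t = t' then ω d ^ (m * (t : ℕ)) else 0 := by
  induction m generalizing t t' with
  | zero => simp [Matrix.one_apply]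
  | succ n ih =>
    rw [pow_succ, Matrix.mul_apply]
    simp only [ih]
    simp only [Zop, Matrix.of_apply, ite_mul, zero_mul]
    rw [Finset.sum_ite_eq Finset.univ t (fun s => ω d ^ (n * (t:ℕ)) * (if s = t' then Complex.exp (2 * Real.pi * Complex.I * ((s:ℕ):ℂ) / d) else 0))]
    simp only [Finset.mem_univ, if_true, mul_ite, mul_zero]
    by_cases h : t = t'
    · rw [if_pos h, if_pos h, ← ω_pow, ← pow_add]
      congr 1
      ring
    · rw [if_neg h, if_neg h]

lemma pauli_apply (p q t t' : Fin d) :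
    pauli d p q t t' = if t' = t + p then ω d ^ ((q : ℕ) * (t' : ℕ)) else 0 := by
  rw [pauli, Matrix.mul_apply]
  simp only [Xpow_apply, Zpow_apply, ite_mul, one_mul, zero_mul]
  rw [Finset.sum_ite_eq' Finset.univ (t + ((p:ℕ) : Fin d)) (fun s => if s = t' then ω d ^ ((q:ℕ) * (s:ℕ)) else 0)]
  simp only [Finset.mem_univ, if_true, Fin.cast_val_eq_self]
  by_cases h : t' = t + p
  · rw [if_pos h.symm, if_pos h, h]
  · rw [if_neg (fun hh => h hh.symm), if_neg h]

lemma pauli_unitary (p q : Fin d) : (pauli d p q)ᴴ * pauli d p q = 1 := by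
  ext t t'
  rw [Matrix.mul_apply]
  simp only [Matrix.conjTranspose_apply, pauli_apply]
  rw [Finset.sum_eq_single (t - p)]
  · rw [sub_add_cancel]
    by_cases h : t' = t
    · subst h
      simp only [if_pos rfl, Matrix.one_apply_eq]
      exact star_ω_pow d _
    · rw [if_neg h, mul_zero, Matrix.one_apply_ne (fun hh => h hh.symm)]
  · intro s _ hs
    have hc : ¬ (t = s + p) := fun hh => hs (by rw [hh, add_sub_cancel_right])
    rw [if_neg hc, star_zero, zero_mul]
  · intro h; exact absurd (Finset.mem_univ _) h

lemma pauli_mul_conjTranspose (p q : Fin d) : pauli d p q * (pauli d p q)ᴴ = 1 :=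
  mul_eq_one_comm.mp (pauli_unitary d p q)

lemma pauli_transpose (p q : Fin d) :
    (pauli d p q)ᵀ = ω d ^ ((q : ℕ) * (p : ℕ)) • pauli d (-p) q := by
  ext t t'
  simp only [Matrix.transpose_apply, Matrix.smul_apply, pauli_apply, smul_eq_mul]
  by_cases h : t = t' + p
  · have h' : t' = t + (-p) := by rw [h]; ring
    rw [if_pos h, if_pos h', ← pow_add]
    apply ω_pow_congr
    rw [h, Fin.val_add]
    have hmod := Nat.ModEq.mul_left (q : ℕ) (Nat.mod_modEq ((t' : ℕ) + (p : ℕ)) d)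
    calc ((q:ℕ) * (((t':ℕ) + (p:ℕ)) % d)) % d
        = ((q:ℕ) * ((t':ℕ) + (p:ℕ))) % d := hmod
      _ = ((q:ℕ)*(p:ℕ) + (q:ℕ)*(t':ℕ)) % d := by ring_nf
  · have h' : ¬ (t' = t + (-p)) := fun hh => h (by rw [hh]; ring)
    rw [if_neg h, if_neg h', mul_zero]

lemma pauli_kron_eq_smul {p q r s p' q' r' s' : Fin d} {c : ℂ}
    (h : pauli d p q ⊗ₖ pauli d r s = c • (pauli d p' q' ⊗ₖ pauli d r' s')) :
    p = p' ∧ q = q' ∧ r = r' ∧ s = s' := by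
  have he : ∀ t u t' u' : Fin d,
      pauli d p q t t' * pauli d r s u u' = c * (pauli d p' q' t t' * pauli d r' s' u u') := by
    intro t u t' u'
    have h1 := congrFun (congrFun h (t, u)) (t', u')
    simpa [Matrix.kroneckerMap_apply, Matrix.smul_apply, smul_eq_mul, mul_assoc] using h1
  have hpr : p = p' ∧ r = r' := by
    have h0 := he 0 0 (0 + p) (0 + r)
    rw [pauli_apply, pauli_apply, pauli_apply, pauli_apply, if_pos rfl, if_pos rfl] at h0
    constructor
    · by_contra hpp
      rw [if_neg (fun hh : (0:Fin d) + p = 0 + p' => hpp (by simpa using hh)),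
        zero_mul, mul_zero] at h0
      exact (mul_ne_zero (ω_pow_ne_zero d _) (ω_pow_ne_zero d _)) h0
    · by_contra hrr
      rw [if_neg (fun hh : (0:Fin d) + r = 0 + r' => hrr (by simpa using hh)),
        mul_zero, mul_zero] at h0
      exact (mul_ne_zero (ω_pow_ne_zero d _) (ω_pow_ne_zero d _)) h0
  obtain ⟨hp, hr⟩ := hpr
  subst hp; subst hr
  have key : ∀ a b : Fin d,
      ω d ^ ((q:ℕ) * (a:ℕ)) * ω d ^ ((s:ℕ) * (b:ℕ))
        = c * (ω d ^ ((q':ℕ) * (a:ℕ)) * ω d ^ ((s':ℕ) * (b:ℕ))) := by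
    intro a b
    have h0 := he (a - p) (b - r) a b
    rw [pauli_apply, pauli_apply, pauli_apply, pauli_apply] at h0
    simpa only [sub_add_cancel, eq_self_iff_true, if_true] using h0
  have hc : c = 1 := by
    have h0 := key 0 0
    simpa using h0.symm
  subst hc
  rcases Nat.lt_or_ge 1 d with hd | hd
  · have hone : ((1 : Fin d) : ℕ) = 1 := by
      simp [Fin.val_one, Nat.mod_eq_of_lt hd]
    refine ⟨rfl, ω_pow_inj d ?_, rfl, ω_pow_inj d ?_⟩
    · have h0 := key 1 0
      simpa [hone, Nat.mod_eq_of_lt hd] using h0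
    · have h0 := key 0 1
      simpa [hone, Nat.mod_eq_of_lt hd] using h0
  · have hd1 : d = 1 := le_antisymm hd (Nat.one_le_iff_ne_zero.mpr (NeZero.ne d))
    subst hd1
    exact ⟨rfl, Subsingleton.elim _ _, rfl, Subsingleton.elim _ _⟩

lemma clifford_surj (U : Matrix (Fin d × Fin d) (Fin d × Fin d) ℂ)
    (hU : U ∈ Matrix.unitaryGroup (Fin d × Fin d) ℂ)
    (hClif : ∀ p q r s : Fin d, ∃ (p' q' r' s' : Fin d) (θ : ℝ),
      U * (pauli d p q ⊗ₖ pauli d r s) * Uᴴ =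
        Complex.exp (θ * Complex.I) • (pauli d p' q' ⊗ₖ pauli d r' s')) :
    ∀ p' q' r' s' : Fin d, ∃ (p q r s : Fin d) (θ : ℝ),
      U * (pauli d p q ⊗ₖ pauli d r s) * Uᴴ =
        Complex.exp (θ * Complex.I) • (pauli d p' q' ⊗ₖ pauli d r' s') := by
  have hUl : Uᴴ * U = 1 := by
    have := Matrix.mem_unitaryGroup_iff'.mp hU
    simpa [Matrix.star_eq_conjTranspose] using this
  have hcancel : ∀ M : Matrix (Fin d × Fin d) (Fin d × Fin d) ℂ,
      Uᴴ * (U * M * Uᴴ) * U = M := by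
    intro M
    calc Uᴴ * (U * M * Uᴴ) * U = (Uᴴ * U) * M * (Uᴴ * U) := by
          simp only [mul_assoc]
      _ = M := by rw [hUl, one_mul, mul_one]
  choose fp fq fr fs θf hf using hClif
  set F : (Fin d × Fin d) × (Fin d × Fin d) → (Fin d × Fin d) × (Fin d × Fin d) :=
    fun v => ((fp v.1.1 v.1.2 v.2.1 v.2.2, fq v.1.1 v.1.2 v.2.1 v.2.2),
              (fr v.1.1 v.1.2 v.2.1 v.2.2, fs v.1.1 v.1.2 v.2.1 v.2.2)) with hF
  have hinj : Function.Injective F := by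
    rintro ⟨⟨a, b⟩, ⟨c, e⟩⟩ ⟨⟨a', b'⟩, ⟨c', e'⟩⟩ hvw
    have h1 := hf a b c e
    have h2 := hf a' b' c' e'
    have hT : (pauli d (fp a b c e) (fq a b c e) ⊗ₖ pauli d (fr a b c e) (fs a b c e))
        = (pauli d (fp a' b' c' e') (fq a' b' c' e') ⊗ₖ pauli d (fr a' b' c' e') (fs a' b' c' e')) := by
      have e1 : fp a b c e = fp a' b' c' e' := congrArg (fun x => x.1.1) hvw
      have e2 : fq a b c e = fq a' b' c' e' := congrArg (fun x => x.1.2) hvw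
      have e3 : fr a b c e = fr a' b' c' e' := congrArg (fun x => x.2.1) hvw
      have e4 : fs a b c e = fs a' b' c' e' := congrArg (fun x => x.2.2) hvw
      rw [e1, e2, e3, e4]
    set e1 := Complex.exp (θf a b c e * Complex.I) with he1
    set e2 := Complex.exp (θf a' b' c' e' * Complex.I) with he2
    have h3 : Uᴴ * (e2 • (U * (pauli d a b ⊗ₖ pauli d c e) * Uᴴ)) * U
        = Uᴴ * (e1 • (U * (pauli d a' b' ⊗ₖ pauli d c' e') * Uᴴ)) * U := by
      rw [h1, h2, hT, smul_smul, smul_smul, mul_comm e2 e1]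
    rw [Matrix.mul_smul, Matrix.smul_mul, Matrix.mul_smul, Matrix.smul_mul,
      hcancel, hcancel] at h3
    have he2ne : e2 ≠ 0 := Complex.exp_ne_zero _
    have h4 : (pauli d a b ⊗ₖ pauli d c e)
        = (e2⁻¹ * e1) • (pauli d a' b' ⊗ₖ pauli d c' e') := by
      rw [mul_smul, ← h3, smul_smul, inv_mul_cancel₀ he2ne, one_smul]
    obtain ⟨g1, g2, g3, g4⟩ := pauli_kron_eq_smul d h4
    subst g1; subst g2; subst g3; subst g4
    rfl
  have hsurj : Function.Surjective F := Finite.injective_iff_surjective.mp hinj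
  intro p' q' r' s'
  obtain ⟨v, hv⟩ := hsurj ((p', q'), (r', s'))
  refine ⟨v.1.1, v.1.2, v.2.1, v.2.2, θf v.1.1 v.1.2 v.2.1 v.2.2, ?_⟩
  have h1 : fp v.1.1 v.1.2 v.2.1 v.2.2 = p' := congrArg (fun x => x.1.1) hv
  have h2 : fq v.1.1 v.1.2 v.2.1 v.2.2 = q' := congrArg (fun x => x.1.2) hv
  have h3 : fr v.1.1 v.1.2 v.2.1 v.2.2 = r' := congrArg (fun x => x.2.1) hv
  have h4 : fs v.1.1 v.1.2 v.2.1 v.2.2 = s' := congrArg (fun x => x.2.2) hv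
  have := hf v.1.1 v.1.2 v.2.1 v.2.2
  rw [h1, h2, h3, h4] at this
  exact this

end CP

namespace CP

lemma ω_pow_eq_exp (d : ℕ) [NeZero d] (n : ℕ) :
    ω d ^ n = Complex.exp (((2 * Real.pi * n / d : ℝ) : ℂ) * Complex.I) := by
  rw [ω_pow]
  congr 1
  push_cast
  ring

lemma pauli_zero (d : ℕ) [NeZero d] : pauli d 0 0 = 1 := by
  simp [pauli]

lemma mulL_one_kron_apply (d : ℕ) [NeZero d]
    (V : Matrix (Fin d × Fin d) (Fin d × Fin d) ℂ) (T : Matrix (Fin d) (Fin d) ℂ)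
    (a b rA rB : Fin d) :
    (V * ((1 : Matrix (Fin d) (Fin d) ℂ) ⊗ₖ T)) (a,b) (rA,rB)
      = ∑ r', V (a,b) (rA,r') * T r' rB := by
  rw [Matrix.mul_apply, Fintype.sum_prod_type]
  rw [Finset.sum_eq_single rA]
  · apply Finset.sum_congr rfl
    intro r' _
    simp [Matrix.kroneckerMap_apply, Matrix.one_apply]
  · intro s _ hs
    apply Finset.sum_eq_zero
    intro r' _
    simp [Matrix.kroneckerMap_apply, Matrix.one_apply, hs]
  · simp

lemma kron_mulR_apply (d : ℕ) [NeZero d]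
    (V : Matrix (Fin d × Fin d) (Fin d × Fin d) ℂ) (P Q : Matrix (Fin d) (Fin d) ℂ)
    (a b rA rB : Fin d) :
    ((P ⊗ₖ Q) * V) (a,b) (rA,rB)
      = ∑ a', ∑ b', P a a' * Q b b' * V (a',b') (rA,rB) := by
  rw [Matrix.mul_apply, Fintype.sum_prod_type]
  apply Finset.sum_congr rfl
  intro a' _
  apply Finset.sum_congr rfl
  intro b' _
  simp [Matrix.kroneckerMap_apply]

lemma oneKronE_mul_apply (d : ℕ) [NeZero d] (E : Matrix (Fin d) (Fin d) ℂ)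
    (M : Matrix ((Fin d × Fin d) × Fin d) ((Fin d × Fin d) × Fin d) ℂ)
    (x y : (Fin d × Fin d) × Fin d) :
    ((((1 : Matrix (Fin d × Fin d) (Fin d × Fin d) ℂ) ⊗ₖ E)) * M) x y
      = ∑ u, E x.2 u * M (x.1, u) y := by
  rw [Matrix.mul_apply, Fintype.sum_prod_type]
  rw [Finset.sum_eq_single x.1]
  · apply Finset.sum_congr rfl
    intro u _
    simp [Matrix.kroneckerMap_apply, Matrix.one_apply]
  · intro z _ hz
    apply Finset.sum_eq_zero
    intro u _
    simp [Matrix.kroneckerMap_apply, Matrix.one_apply, Ne.symm hz]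
  · simp

lemma sandwich1 (d : ℕ) [NeZero d] (E : Matrix (Fin d) (Fin d) ℂ)
    (M : Matrix ((Fin d × Fin d) × Fin d) ((Fin d × Fin d) × Fin d) ℂ)
    (x x' : (Fin d × Fin d) × Fin d) :
    ((((1 : Matrix (Fin d × Fin d) (Fin d × Fin d) ℂ) ⊗ₖ E)) * M *
        (((1 : Matrix (Fin d × Fin d) (Fin d × Fin d) ℂ) ⊗ₖ E))ᴴ) x x'
      = ∑ u', (∑ u, E x.2 u * M (x.1, u) (x'.1, u')) * star (E x'.2 u') := by
  rw [Matrix.mul_apply]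
  rw [show (∑ y, ((((1 : Matrix (Fin d × Fin d) (Fin d × Fin d) ℂ) ⊗ₖ E)) * M) x y *
      (((1 : Matrix (Fin d × Fin d) (Fin d × Fin d) ℂ) ⊗ₖ E))ᴴ y x')
    = ∑ y, (∑ u, E x.2 u * M (x.1, u) y) *
        star ((((1 : Matrix (Fin d × Fin d) (Fin d × Fin d) ℂ) ⊗ₖ E)) x' y) from
    Finset.sum_congr rfl fun y _ => by
      rw [oneKronE_mul_apply, Matrix.conjTranspose_apply]]
  rw [Fintype.sum_prod_type]
  rw [Finset.sum_eq_single x'.1]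
  · apply Finset.sum_congr rfl
    intro u' _
    simp [Matrix.kroneckerMap_apply, Matrix.one_apply]
  · intro z _ hz
    apply Finset.sum_eq_zero
    intro u' _
    simp [Matrix.kroneckerMap_apply, Matrix.one_apply, Ne.symm hz]
  · simp

lemma kronP_mul_apply (d : ℕ) [NeZero d] (P : Matrix (Fin d) (Fin d) ℂ)
    (M : Matrix ((Fin d × Fin d) × Fin d) ((Fin d × Fin d) × Fin d) ℂ)
    (x y : (Fin d × Fin d) × Fin d) :
    (((P ⊗ₖ (1 : Matrix (Fin d) (Fin d) ℂ)) ⊗ₖ (1 : Matrix (Fin d) (Fin d) ℂ)) * M) x y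
      = ∑ a1, P x.1.1 a1 * M ((a1, x.1.2), x.2) y := by
  rw [Matrix.mul_apply, Fintype.sum_prod_type]
  rw [show (∑ z1 : Fin d × Fin d, ∑ z2 : Fin d,
      ((P ⊗ₖ (1 : Matrix (Fin d) (Fin d) ℂ)) ⊗ₖ (1 : Matrix (Fin d) (Fin d) ℂ)) x (z1, z2) * M (z1, z2) y)
    = ∑ z1 : Fin d × Fin d, (P ⊗ₖ (1 : Matrix (Fin d) (Fin d) ℂ)) x.1 z1 * M (z1, x.2) y from by
      apply Finset.sum_congr rfl
      intro z1 _
      rw [Finset.sum_eq_single x.2]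
      · simp [Matrix.kroneckerMap_apply, Matrix.one_apply]
      · intro z2 _ hz
        simp [Matrix.kroneckerMap_apply, Matrix.one_apply, Ne.symm hz]
      · simp]
  rw [Fintype.sum_prod_type]
  apply Finset.sum_congr rfl
  intro a1 _
  rw [Finset.sum_eq_single x.1.2]
  · simp [Matrix.kroneckerMap_apply, Matrix.one_apply]
  · intro ra _ hra
    simp [Matrix.kroneckerMap_apply, Matrix.one_apply, Ne.symm hra]
  · simp

lemma sandwich2 (d : ℕ) [NeZero d] (P : Matrix (Fin d) (Fin d) ℂ)
    (M : Matrix ((Fin d × Fin d) × Fin d) ((Fin d × Fin d) × Fin d) ℂ)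
    (x x' : (Fin d × Fin d) × Fin d) :
    (((P ⊗ₖ (1 : Matrix (Fin d) (Fin d) ℂ)) ⊗ₖ (1 : Matrix (Fin d) (Fin d) ℂ)) * M *
        ((P ⊗ₖ (1 : Matrix (Fin d) (Fin d) ℂ)) ⊗ₖ (1 : Matrix (Fin d) (Fin d) ℂ))ᴴ) x x'
      = ∑ a2, (∑ a1, P x.1.1 a1 * M ((a1, x.1.2), x.2) ((a2, x'.1.2), x'.2)) *
          star (P x'.1.1 a2) := by
  rw [Matrix.mul_apply]
  rw [show (∑ y, (((P ⊗ₖ (1 : Matrix (Fin d) (Fin d) ℂ)) ⊗ₖ (1 : Matrix (Fin d) (Fin d) ℂ)) * M) x y *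
      ((P ⊗ₖ (1 : Matrix (Fin d) (Fin d) ℂ)) ⊗ₖ (1 : Matrix (Fin d) (Fin d) ℂ))ᴴ y x')
    = ∑ y, (∑ a1, P x.1.1 a1 * M ((a1, x.1.2), x.2) y) *
        star (((P ⊗ₖ (1 : Matrix (Fin d) (Fin d) ℂ)) ⊗ₖ (1 : Matrix (Fin d) (Fin d) ℂ)) x' y) from
    Finset.sum_congr rfl fun y _ => by
      rw [kronP_mul_apply, Matrix.conjTranspose_apply]]
  rw [Fintype.sum_prod_type]
  rw [show (∑ z1 : Fin d × Fin d, ∑ z2 : Fin d,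
      (∑ a1, P x.1.1 a1 * M ((a1, x.1.2), x.2) (z1, z2)) *
        star (((P ⊗ₖ (1 : Matrix (Fin d) (Fin d) ℂ)) ⊗ₖ (1 : Matrix (Fin d) (Fin d) ℂ)) x' (z1, z2)))
    = ∑ z1 : Fin d × Fin d,
      (∑ a1, P x.1.1 a1 * M ((a1, x.1.2), x.2) (z1, x'.2)) *
        star ((P ⊗ₖ (1 : Matrix (Fin d) (Fin d) ℂ)) x'.1 z1) from by
      apply Finset.sum_congr rfl
      intro z1 _
      rw [Finset.sum_eq_single x'.2]
      · simp [Matrix.kroneckerMap_apply, Matrix.one_apply]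
      · intro z2 _ hz
        simp [Matrix.kroneckerMap_apply, Matrix.one_apply, Ne.symm hz]
      · simp]
  rw [Fintype.sum_prod_type]
  rw [Finset.sum_comm]
  rw [Finset.sum_eq_single x'.1.2 ]
  · apply Finset.sum_congr rfl
    intro a2 _
    simp [Matrix.kroneckerMap_apply, Matrix.one_apply]
  · intro ra _ hra
    apply Finset.sum_eq_zero
    intro a2 _
    simp [Matrix.kroneckerMap_apply, Matrix.one_apply, Ne.symm hra]
  · simp

lemma unitary_collapse (d : ℕ) [NeZero d] (Q : Matrix (Fin d) (Fin d) ℂ)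
    (hQ : Qᴴ * Q = 1) (f g : Fin d → ℂ) :
    ∑ b, (∑ b1, Q b b1 * f b1) * star (∑ b2, Q b b2 * g b2)
      = ∑ b, f b * star (g b) := by
  have step1 : ∑ b, (∑ b1, Q b b1 * f b1) * star (∑ b2, Q b b2 * g b2)
      = ∑ b, ∑ b1, ∑ b2, (star (Q b b2) * Q b b1) * (f b1 * star (g b2)) := by
    apply Finset.sum_congr rfl
    intro b _
    rw [star_sum, Finset.sum_mul_sum]
    apply Finset.sum_congr rfl
    intro b1 _
    apply Finset.sum_congr rfl
    intro b2 _
    rw [star_mul']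
    ring
  rw [step1, Finset.sum_comm]
  have step2 : ∀ b1, (∑ b, ∑ b2, (star (Q b b2) * Q b b1) * (f b1 * star (g b2)))
      = ∑ b2, ((Qᴴ * Q) b2 b1) * (f b1 * star (g b2)) := by
    intro b1
    rw [Finset.sum_comm]
    apply Finset.sum_congr rfl
    intro b2 _
    rw [Matrix.mul_apply, Finset.sum_mul]
    apply Finset.sum_congr rfl
    intro b _
    rw [Matrix.conjTranspose_apply]
  rw [Finset.sum_congr rfl fun b1 _ => step2 b1]
  rw [hQ]
  apply Finset.sum_congr rfl
  intro b1 _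
  rw [Finset.sum_eq_single b1]
  · simp [Matrix.one_apply]
  · intro b2 _ hb
    simp [Matrix.one_apply, hb]
  · simp

lemma PsiVec_eq (d : ℕ) [NeZero d] (V : Matrix (Fin d × Fin d) (Fin d × Fin d) ℂ)
    (x : (Fin d × Fin d) × (Fin d × Fin d)) :
    PsiVec V x = V (x.1.1, x.2.1) (x.1.2, x.2.2) *
      (((1 / Real.sqrt d : ℝ) : ℂ) * ((1 / Real.sqrt d : ℝ) : ℂ)) := by
  rw [PsiVec]
  rw [Finset.sum_eq_single x.1.2]
  · rw [Finset.sum_eq_single x.2.2]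
    · simp [Phi, mul_assoc]
    · intro b' _ hb
      simp [Phi, hb]
    · simp
  · intro a' _ ha
    apply Finset.sum_eq_zero
    intro b' _
    simp [Phi, ha]
  · simp

end CP

/-- for a generalized Clifford `U` and `|Ψ(U†)⟩ = (U†⊗I)(Φ_d ⊗ Φ_d)`,
every Pauli `σ_{pq}` on `R_B` can be replaced by local Paulis on `A` and `B` up to a phase;
consequently conjugating the reduced state `Ψ(U†)^{AR_AR_B}` by `σ_{pq}` on `R_B` equals
conjugating it by `σ_{p'q'}` on `A`. -/
theorem clifford_pauli_replacement (d : ℕ) [NeZero d]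
    (U : Matrix (Fin d × Fin d) (Fin d × Fin d) ℂ)
    (hU : U ∈ Matrix.unitaryGroup (Fin d × Fin d) ℂ)
    (hClif : ∀ p q r s : Fin d, ∃ (p' q' r' s' : Fin d) (θ : ℝ),
      U * (pauli d p q ⊗ₖ pauli d r s) * Uᴴ =
        Complex.exp (θ * Complex.I) • (pauli d p' q' ⊗ₖ pauli d r' s')) :
    ∀ p q : Fin d, ∃ (θ : ℝ) (p' q' r' s' : Fin d),
      ((fun x : (Fin d × Fin d) × (Fin d × Fin d) =>
          ∑ r', pauli d p q x.2.2 r' * PsiVec Uᴴ (x.1, (x.2.1, r')))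
        = Complex.exp (θ * Complex.I) •
          fun x : (Fin d × Fin d) × (Fin d × Fin d) =>
            ∑ a', ∑ b', pauli d p' q' x.1.1 a' * pauli d r' s' x.2.1 b' *
              PsiVec Uᴴ ((a', x.1.2), (b', x.2.2))) ∧
      (let ρ : Matrix ((Fin d × Fin d) × Fin d) ((Fin d × Fin d) × Fin d) ℂ :=
        Matrix.of fun x x' =>
          ∑ b, PsiVec Uᴴ (x.1, (b, x.2)) * star (PsiVec Uᴴ (x'.1, (b, x'.2)))
      ((1 : Matrix (Fin d × Fin d) (Fin d × Fin d) ℂ) ⊗ₖ pauli d p q) * ρ *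
          ((1 : Matrix (Fin d × Fin d) (Fin d × Fin d) ℂ) ⊗ₖ pauli d p q)ᴴ
        = ((pauli d p' q' ⊗ₖ (1 : Matrix (Fin d) (Fin d) ℂ)) ⊗ₖ
              (1 : Matrix (Fin d) (Fin d) ℂ)) * ρ *
            ((pauli d p' q' ⊗ₖ (1 : Matrix (Fin d) (Fin d) ℂ)) ⊗ₖ
              (1 : Matrix (Fin d) (Fin d) ℂ))ᴴ) := by
  intro p q
  have hUl : Uᴴ * U = 1 := by
    have := Matrix.mem_unitaryGroup_iff'.mp hU
    simpa [Matrix.star_eq_conjTranspose] using this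
  obtain ⟨p₀, q₀, r₀, s₀, θ₀, hc⟩ := CP.clifford_surj d U hU hClif 0 0 (-p) q
  rw [CP.pauli_zero] at hc
  set θ₁ : ℝ := 2 * Real.pi * ((q : ℕ) * (p : ℕ)) / d with hθ₁
  -- key matrix identity
  have h5 : (pauli d p₀ q₀ ⊗ₖ pauli d r₀ s₀) * Uᴴ
      = Complex.exp ((θ₀ : ℂ) * Complex.I) •
        (Uᴴ * ((1 : Matrix (Fin d) (Fin d) ℂ) ⊗ₖ pauli d (-p) q)) := by
    have h5' := congrArg (fun M => Uᴴ * M) hc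
    simp only at h5'
    rw [Matrix.mul_smul] at h5'
    have hL : Uᴴ * (U * (pauli d p₀ q₀ ⊗ₖ pauli d r₀ s₀) * Uᴴ)
        = (pauli d p₀ q₀ ⊗ₖ pauli d r₀ s₀) * Uᴴ := by
      calc Uᴴ * (U * (pauli d p₀ q₀ ⊗ₖ pauli d r₀ s₀) * Uᴴ)
          = (Uᴴ * U) * ((pauli d p₀ q₀ ⊗ₖ pauli d r₀ s₀) * Uᴴ) := by
            simp only [mul_assoc]
        _ = (pauli d p₀ q₀ ⊗ₖ pauli d r₀ s₀) * Uᴴ := by rw [hUl, one_mul]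
    rw [hL] at h5'
    exact h5'
  have h6 : Uᴴ * ((1 : Matrix (Fin d) (Fin d) ℂ) ⊗ₖ pauli d (-p) q)
      = Complex.exp (((-θ₀ : ℝ) : ℂ) * Complex.I) •
        ((pauli d p₀ q₀ ⊗ₖ pauli d r₀ s₀) * Uᴴ) := by
    rw [h5, smul_smul, ← Complex.exp_add,
      show (((-θ₀ : ℝ) : ℂ) * Complex.I + (θ₀ : ℂ) * Complex.I = 0) by push_cast; ring,
      Complex.exp_zero, one_smul]
  have key : Uᴴ * ((1 : Matrix (Fin d) (Fin d) ℂ) ⊗ₖ (pauli d p q)ᵀ)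
      = Complex.exp (((θ₁ - θ₀ : ℝ) : ℂ) * Complex.I) •
        ((pauli d p₀ q₀ ⊗ₖ pauli d r₀ s₀) * Uᴴ) := by
    have hexp : Complex.exp (((θ₁ - θ₀ : ℝ) : ℂ) * Complex.I)
        = Complex.exp ((((2 * Real.pi * (((q : ℕ) * (p : ℕ) : ℕ)) / d : ℝ)) : ℂ) * Complex.I) *
          Complex.exp (((-θ₀ : ℝ) : ℂ) * Complex.I) := by
      rw [← Complex.exp_add]
      congr 1
      rw [hθ₁]
      push_cast
      ring
    rw [CP.pauli_transpose, Matrix.kronecker_smul, Matrix.mul_smul, h6, smul_smul, hexp,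
      CP.ω_pow_eq_exp]
  -- the vector identity (part 1)
  have hvec : ((fun x : (Fin d × Fin d) × (Fin d × Fin d) =>
        ∑ r', pauli d p q x.2.2 r' * PsiVec Uᴴ (x.1, (x.2.1, r')))
      = Complex.exp (((θ₁ - θ₀ : ℝ) : ℂ) * Complex.I) •
        fun x : (Fin d × Fin d) × (Fin d × Fin d) =>
          ∑ a', ∑ b', pauli d p₀ q₀ x.1.1 a' * pauli d r₀ s₀ x.2.1 b' *
            PsiVec Uᴴ ((a', x.1.2), (b', x.2.2))) := by
    funext x
    obtain ⟨⟨a, rA⟩, b, rB⟩ := x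
    simp only [Pi.smul_apply, smul_eq_mul]
    have hLs : (∑ r', pauli d p q rB r' * PsiVec Uᴴ ((a, rA), (b, r')))
        = (Uᴴ * ((1 : Matrix (Fin d) (Fin d) ℂ) ⊗ₖ (pauli d p q)ᵀ)) (a, b) (rA, rB) *
          (((1 / Real.sqrt d : ℝ) : ℂ) * ((1 / Real.sqrt d : ℝ) : ℂ)) := by
      rw [CP.mulL_one_kron_apply, Finset.sum_mul]
      apply Finset.sum_congr rfl
      intro r' _
      rw [CP.PsiVec_eq]
      simp only [Matrix.transpose_apply]
      ring
    have hRs : (∑ a', ∑ b', pauli d p₀ q₀ a a' * pauli d r₀ s₀ b b' *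
          PsiVec Uᴴ ((a', rA), (b', rB)))
        = ((pauli d p₀ q₀ ⊗ₖ pauli d r₀ s₀) * Uᴴ) (a, b) (rA, rB) *
          (((1 / Real.sqrt d : ℝ) : ℂ) * ((1 / Real.sqrt d : ℝ) : ℂ)) := by
      rw [CP.kron_mulR_apply, Finset.sum_mul]
      apply Finset.sum_congr rfl
      intro a' _
      rw [Finset.sum_mul]
      apply Finset.sum_congr rfl
      intro b' _
      rw [CP.PsiVec_eq]
      ring
    rw [hLs, hRs, key, Matrix.smul_apply, smul_eq_mul]
    ring
  refine ⟨θ₁ - θ₀, p₀, q₀, r₀, s₀, hvec, ?_⟩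
  -- part 2
  intro ρ
  have hρ : ∀ y y' : (Fin d × Fin d) × Fin d,
      ρ y y' = ∑ b', PsiVec Uᴴ (y.1, (b', y.2)) * star (PsiVec Uᴴ (y'.1, (b', y'.2))) :=
    fun y y' => rfl
  have hephase : Complex.exp (((θ₁ - θ₀ : ℝ) : ℂ) * Complex.I) *
      star (Complex.exp (((θ₁ - θ₀ : ℝ) : ℂ) * Complex.I)) = 1 := by
    have hst : star (Complex.exp (((θ₁ - θ₀ : ℝ) : ℂ) * Complex.I))
        = Complex.exp (-(((θ₁ - θ₀ : ℝ) : ℂ) * Complex.I)) := by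
      have : (starRingEnd ℂ) (((θ₁ - θ₀ : ℝ) : ℂ) * Complex.I)
          = -(((θ₁ - θ₀ : ℝ) : ℂ) * Complex.I) := by
        rw [_root_.map_mul, Complex.conj_ofReal, Complex.conj_I]
        ring
      rw [← this, Complex.exp_conj]
      rfl
    rw [hst, ← Complex.exp_add, add_neg_cancel, Complex.exp_zero]
  ext x x'
  rw [CP.sandwich1 d (pauli d p q) ρ x x', CP.sandwich2 d (pauli d p₀ q₀) ρ x x']
  -- Step A : LHS as Σ_b vL * star vL
  have stepA : (∑ u', (∑ u, pauli d p q x.2 u * ρ (x.1, u) (x'.1, u')) *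
        star (pauli d p q x'.2 u'))
      = ∑ b, (∑ u, pauli d p q x.2 u * PsiVec Uᴴ (x.1, (b, u))) *
          star (∑ u', pauli d p q x'.2 u' * PsiVec Uᴴ (x'.1, (b, u'))) := by
    calc (∑ u', (∑ u, pauli d p q x.2 u * ρ (x.1, u) (x'.1, u')) * star (pauli d p q x'.2 u'))
        = ∑ u', ∑ u, ∑ b, (pauli d p q x.2 u * PsiVec Uᴴ (x.1, (b, u))) *
            (star (pauli d p q x'.2 u') * star (PsiVec Uᴴ (x'.1, (b, u')))) := by
          apply Finset.sum_congr rfl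
          intro u' _
          rw [Finset.sum_mul]
          apply Finset.sum_congr rfl
          intro u _
          rw [hρ, Finset.mul_sum, Finset.sum_mul]
          apply Finset.sum_congr rfl
          intro b _
          ring
      _ = ∑ u, ∑ u', ∑ b, (pauli d p q x.2 u * PsiVec Uᴴ (x.1, (b, u))) *
            (star (pauli d p q x'.2 u') * star (PsiVec Uᴴ (x'.1, (b, u')))) := Finset.sum_comm
      _ = ∑ u, ∑ b, ∑ u', (pauli d p q x.2 u * PsiVec Uᴴ (x.1, (b, u))) *
            (star (pauli d p q x'.2 u') * star (PsiVec Uᴴ (x'.1, (b, u')))) :=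
          Finset.sum_congr rfl fun u _ => Finset.sum_comm
      _ = ∑ b, ∑ u, ∑ u', (pauli d p q x.2 u * PsiVec Uᴴ (x.1, (b, u))) *
            (star (pauli d p q x'.2 u') * star (PsiVec Uᴴ (x'.1, (b, u')))) := Finset.sum_comm
      _ = ∑ b, (∑ u, pauli d p q x.2 u * PsiVec Uᴴ (x.1, (b, u))) *
            star (∑ u', pauli d p q x'.2 u' * PsiVec Uᴴ (x'.1, (b, u'))) := by
          apply Finset.sum_congr rfl
          intro b _
          rw [star_sum, Finset.sum_mul_sum]
          apply Finset.sum_congr rfl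
          intro u _
          apply Finset.sum_congr rfl
          intro u' _
          rw [star_mul']
  rw [stepA]
  -- Step B : use hvec pointwise and cancel the phase
  have stepB : (∑ b, (∑ u, pauli d p q x.2 u * PsiVec Uᴴ (x.1, (b, u))) *
        star (∑ u', pauli d p q x'.2 u' * PsiVec Uᴴ (x'.1, (b, u'))))
      = ∑ b, (∑ a1, ∑ b1, pauli d p₀ q₀ x.1.1 a1 * pauli d r₀ s₀ b b1 *
            PsiVec Uᴴ ((a1, x.1.2), (b1, x.2))) *
          star (∑ a2, ∑ b2, pauli d p₀ q₀ x'.1.1 a2 * pauli d r₀ s₀ b b2 *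
            PsiVec Uᴴ ((a2, x'.1.2), (b2, x'.2))) := by
    apply Finset.sum_congr rfl
    intro b _
    have h1 := congrFun hvec (x.1, (b, x.2))
    have h2 := congrFun hvec (x'.1, (b, x'.2))
    simp only [Pi.smul_apply, smul_eq_mul] at h1 h2
    rw [h1, h2, star_mul']
    calc Complex.exp (((θ₁ - θ₀ : ℝ) : ℂ) * Complex.I) *
          (∑ a1, ∑ b1, pauli d p₀ q₀ x.1.1 a1 * pauli d r₀ s₀ b b1 *
            PsiVec Uᴴ ((a1, x.1.2), (b1, x.2))) *
          (star (Complex.exp (((θ₁ - θ₀ : ℝ) : ℂ) * Complex.I)) *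
           star (∑ a2, ∑ b2, pauli d p₀ q₀ x'.1.1 a2 * pauli d r₀ s₀ b b2 *
            PsiVec Uᴴ ((a2, x'.1.2), (b2, x'.2))))
        = (Complex.exp (((θ₁ - θ₀ : ℝ) : ℂ) * Complex.I) *
            star (Complex.exp (((θ₁ - θ₀ : ℝ) : ℂ) * Complex.I))) *
          ((∑ a1, ∑ b1, pauli d p₀ q₀ x.1.1 a1 * pauli d r₀ s₀ b b1 *
            PsiVec Uᴴ ((a1, x.1.2), (b1, x.2))) *
           star (∑ a2, ∑ b2, pauli d p₀ q₀ x'.1.1 a2 * pauli d r₀ s₀ b b2 *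
            PsiVec Uᴴ ((a2, x'.1.2), (b2, x'.2)))) := by ring
      _ = _ := by rw [hephase, one_mul]
  rw [stepB]
  -- Step C : remove the unitary on B
  have hvR : ∀ (x1 : Fin d × Fin d) (u b : Fin d),
      (∑ a1, ∑ b1, pauli d p₀ q₀ x1.1 a1 * pauli d r₀ s₀ b b1 *
          PsiVec Uᴴ ((a1, x1.2), (b1, u)))
        = ∑ b1, pauli d r₀ s₀ b b1 *
            (∑ a1, pauli d p₀ q₀ x1.1 a1 * PsiVec Uᴴ ((a1, x1.2), (b1, u))) := by
    intro x1 u b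
    rw [Finset.sum_comm]
    apply Finset.sum_congr rfl
    intro b1 _
    rw [Finset.mul_sum]
    apply Finset.sum_congr rfl
    intro a1 _
    ring
  have stepC : (∑ b, (∑ a1, ∑ b1, pauli d p₀ q₀ x.1.1 a1 * pauli d r₀ s₀ b b1 *
            PsiVec Uᴴ ((a1, x.1.2), (b1, x.2))) *
          star (∑ a2, ∑ b2, pauli d p₀ q₀ x'.1.1 a2 * pauli d r₀ s₀ b b2 *
            PsiVec Uᴴ ((a2, x'.1.2), (b2, x'.2))))
      = ∑ b, (∑ a1, pauli d p₀ q₀ x.1.1 a1 * PsiVec Uᴴ ((a1, x.1.2), (b, x.2))) *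
          star (∑ a2, pauli d p₀ q₀ x'.1.1 a2 * PsiVec Uᴴ ((a2, x'.1.2), (b, x'.2))) := by
    have := CP.unitary_collapse d (pauli d r₀ s₀) (CP.pauli_unitary d r₀ s₀)
      (fun b1 => ∑ a1, pauli d p₀ q₀ x.1.1 a1 * PsiVec Uᴴ ((a1, x.1.2), (b1, x.2)))
      (fun b2 => ∑ a2, pauli d p₀ q₀ x'.1.1 a2 * PsiVec Uᴴ ((a2, x'.1.2), (b2, x'.2)))
    rw [← this]
    apply Finset.sum_congr rfl
    intro b _
    rw [hvR x.1 x.2 b, hvR x'.1 x'.2 b]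
  rw [stepC]
  -- Step D : reassemble the RHS
  calc (∑ b, (∑ a1, pauli d p₀ q₀ x.1.1 a1 * PsiVec Uᴴ ((a1, x.1.2), (b, x.2))) *
        star (∑ a2, pauli d p₀ q₀ x'.1.1 a2 * PsiVec Uᴴ ((a2, x'.1.2), (b, x'.2))))
      = ∑ b, ∑ a1, ∑ a2, (pauli d p₀ q₀ x.1.1 a1 * PsiVec Uᴴ ((a1, x.1.2), (b, x.2))) *
          (star (pauli d p₀ q₀ x'.1.1 a2) * star (PsiVec Uᴴ ((a2, x'.1.2), (b, x'.2)))) := by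
        apply Finset.sum_congr rfl
        intro b _
        rw [star_sum, Finset.sum_mul_sum]
        apply Finset.sum_congr rfl
        intro a1 _
        apply Finset.sum_congr rfl
        intro a2 _
        rw [star_mul']
    _ = ∑ a1, ∑ b, ∑ a2, (pauli d p₀ q₀ x.1.1 a1 * PsiVec Uᴴ ((a1, x.1.2), (b, x.2))) *
          (star (pauli d p₀ q₀ x'.1.1 a2) * star (PsiVec Uᴴ ((a2, x'.1.2), (b, x'.2)))) :=
        Finset.sum_comm
    _ = ∑ a1, ∑ a2, ∑ b, (pauli d p₀ q₀ x.1.1 a1 * PsiVec Uᴴ ((a1, x.1.2), (b, x.2))) *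
          (star (pauli d p₀ q₀ x'.1.1 a2) * star (PsiVec Uᴴ ((a2, x'.1.2), (b, x'.2)))) :=
        Finset.sum_congr rfl fun a1 _ => Finset.sum_comm
    _ = ∑ a2, ∑ a1, ∑ b, (pauli d p₀ q₀ x.1.1 a1 * PsiVec Uᴴ ((a1, x.1.2), (b, x.2))) *
          (star (pauli d p₀ q₀ x'.1.1 a2) * star (PsiVec Uᴴ ((a2, x'.1.2), (b, x'.2)))) :=
        Finset.sum_comm
    _ = ∑ a2, (∑ a1, pauli d p₀ q₀ x.1.1 a1 *
            ρ ((a1, x.1.2), x.2) ((a2, x'.1.2), x'.2)) * star (pauli d p₀ q₀ x'.1.1 a2) := by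
        apply Finset.sum_congr rfl
        intro a2 _
        rw [Finset.sum_mul]
        apply Finset.sum_congr rfl
        intro a1 _
        rw [hρ, Finset.mul_sum, Finset.sum_mul]
        apply Finset.sum_congr rfl
        intro b _
        ring
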